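/- For every E > 0 there exist UM-potentials V₁, V₂ with deg(V₁,0) = deg(V₂,0) = 2 such that: V₁ and V₂ are even functions; neither V₁ nor V₂ is a quadratic function (i.e., neither is of the form x ↦ α·x² for a constant α); a(θ) = b_E(θ) for every θ ∈ (0,E); and, moreover, V₁ and V₂ can be chosen so that in addition √(V₂''(0)/V₁''(0)) is irrational. -/

import Mathlib

/-- A UM-potential: analytic, nonnegative, unimodal with minimum 0 at 0, tending to +∞. -/
structure IsUM (V : ℝ → ℝ) : Prop where
  analytic : ∀ x : ℝ, AnalyticAt ℝ V x
  nonneg : ∀ y : ℝ, 0 ≤ V y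
  zero : V 0 = 0
  deriv_pos : ∀ y : ℝ, y ≠ 0 → 0 < y * deriv V y
  tendsto_top : Filter.Tendsto V Filter.atTop Filter.atTop
  tendsto_bot : Filter.Tendsto V Filter.atBot Filter.atTop

/-- The degree of `V` at `0`: the least `m ≥ 1` with nonzero `m`-th derivative at `0`. -/
noncomputable def degAt0 (V : ℝ → ℝ) : ℕ :=
  sInf {m : ℕ | 1 ≤ m ∧ iteratedDeriv m V 0 ≠ 0}

/-- The inverse of the positive branch of a UM-potential. -/
noncomputable def Vinv (V : ℝ → ℝ) (θ : ℝ) : ℝ :=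
  sSup {y : ℝ | 0 ≤ y ∧ V y ≤ θ}

/-- The reflected potential. -/
def reflP (V : ℝ → ℝ) : ℝ → ℝ := fun y => V (-y)

/-- `a(θ) = ∫₀^{V⁻¹(θ)} dy / (√2 √(θ - V y))`. -/
noncomputable def aFun (V : ℝ → ℝ) (θ : ℝ) : ℝ :=
  ∫ y in (0:ℝ)..(Vinv V θ), 1 / (Real.sqrt 2 * Real.sqrt (θ - V y))

/-- `a_ξ(θ) = ∫₀^ξ dy / (√2 √(θ - V y))`. -/
noncomputable def aXi (V : ℝ → ℝ) (ξ θ : ℝ) : ℝ :=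
  ∫ y in (0:ℝ)..ξ, 1 / (Real.sqrt 2 * Real.sqrt (θ - V y))

/-- The special class 𝒮𝒫. -/
def IsSP (V : ℝ → ℝ) : Prop :=
  IsUM V ∧ degAt0 V = 2 ∧
  ∃ Vstar W : ℝ → ℝ,
    (∀ x : ℝ, AnalyticAt ℝ Vstar x) ∧ (∀ x : ℝ, AnalyticAt ℝ W x) ∧
    StrictMono Vstar ∧ Function.Bijective Vstar ∧
    (∀ x : ℝ, W (Vstar x) = x) ∧ (∀ x : ℝ, Vstar x ^ 2 = V x) ∧
    ∃ c : ℝ, c ≠ 0 ∧ ∃ f : ℝ → ℝ, (∀ x : ℝ, AnalyticAt ℝ f x) ∧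
      ∀ x : ℝ, W x = c * x + f (x ^ 2)

open Real Set Filter MeasureTheory intervalIntegral

namespace S19

variable {p₀ p₁ p₂ : ℝ}

/-- coefficient condition -/
structure Good (p₀ p₁ p₂ : ℝ) : Prop where
  h0 : 0 < p₀
  h2 : 0 < p₂
  disc : p₁ ^ 2 < 4 * p₀ * p₂

noncomputable def hP (p₀ p₁ p₂ : ℝ) (t : ℝ) : ℝ :=
  2 * p₀ * t + 2 * p₁ / 3 * t ^ 3 + 2 * p₂ / 5 * t ^ 5

noncomputable def dP (p₀ p₁ p₂ : ℝ) (t : ℝ) : ℝ :=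
  2 * p₀ + 2 * p₁ * t ^ 2 + 2 * p₂ * t ^ 4

lemma hP_hasDerivAt (t : ℝ) : HasDerivAt (hP p₀ p₁ p₂) (dP p₀ p₁ p₂ t) t := by
  have h : HasDerivAt (hP p₀ p₁ p₂)
      (2 * p₀ * 1 + 2 * p₁ / 3 * (3 * t ^ 2) + 2 * p₂ / 5 * (5 * t ^ 4)) t := by
    unfold hP
    exact (((hasDerivAt_id t).const_mul _).add
      (((hasDerivAt_pow 3 t).const_mul _))).add ((hasDerivAt_pow 5 t).const_mul _) |>.congr_deriv
      (by ring)
  convert h using 1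
  unfold dP; ring

lemma dP_pos (G : Good p₀ p₁ p₂) (t : ℝ) : 0 < dP p₀ p₁ p₂ t := by
  have := G.h0; have := G.h2; have := G.disc
  unfold dP
  nlinarith [sq_nonneg (2 * p₂ * t ^ 2 + p₁), sq_nonneg t, sq_nonneg (t^2)]

lemma hP_strictMono (G : Good p₀ p₁ p₂) : StrictMono (hP p₀ p₁ p₂) :=
  strictMono_of_deriv_pos (fun t => by rw [(hP_hasDerivAt t).deriv]; exact dP_pos G t)

lemma hP_odd (t : ℝ) : hP p₀ p₁ p₂ (-t) = - hP p₀ p₁ p₂ t := by unfold hP; ring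

lemma hP_zero : hP p₀ p₁ p₂ 0 = 0 := by unfold hP; ring

lemma hP_continuous : Continuous (hP p₀ p₁ p₂) := by unfold hP; continuity

lemma kappa_pos (G : Good p₀ p₁ p₂) : 0 < p₀ - 5 * p₁ ^ 2 / (36 * p₂) := by
  have := G.h0; have := G.h2; have := G.disc
  rw [sub_pos, div_lt_iff₀ (by linarith)]
  nlinarith

lemma hP_lower (G : Good p₀ p₁ p₂) {t : ℝ} (ht : 0 ≤ t) :
    2 * (p₀ - 5 * p₁ ^ 2 / (36 * p₂)) * t ≤ hP p₀ p₁ p₂ t := by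
  have h2 := G.h2
  have key : 0 ≤ t * (6 * p₂ * t ^ 2 + 5 * p₁) ^ 2 := mul_nonneg ht (sq_nonneg _)
  have hc : 36 * p₂ * (5 * p₁ ^ 2 / (36 * p₂)) = 5 * p₁ ^ 2 := by field_simp
  unfold hP
  nlinarith [key, h2]

lemma hP_tendsto_atTop (G : Good p₀ p₁ p₂) :
    Tendsto (hP p₀ p₁ p₂) atTop atTop := by
  have hκ := kappa_pos G
  apply tendsto_atTop_mono' _ _ ((tendsto_id (α := ℝ)).const_mul_atTop (by positivity :
    (0:ℝ) < 2 * (p₀ - 5 * p₁ ^ 2 / (36 * p₂))))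
  filter_upwards [eventually_ge_atTop (0:ℝ)] with t ht
  exact hP_lower G ht

lemma hP_tendsto_atBot (G : Good p₀ p₁ p₂) :
    Tendsto (hP p₀ p₁ p₂) atBot atBot := by
  have : hP p₀ p₁ p₂ = (fun y => -y) ∘ (hP p₀ p₁ p₂) ∘ (fun t => -t) := by
    funext t; simp [hP_odd]
  rw [this]
  exact (tendsto_neg_atTop_atBot).comp ((hP_tendsto_atTop G).comp tendsto_neg_atBot_atTop)

lemma hP_surjective (G : Good p₀ p₁ p₂) : Function.Surjective (hP p₀ p₁ p₂) :=
  Continuous.surjective hP_continuous (hP_tendsto_atTop G) (hP_tendsto_atBot G)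

noncomputable def hIso (G : Good p₀ p₁ p₂) : ℝ ≃o ℝ :=
  StrictMono.orderIsoOfSurjective _ (hP_strictMono G) (hP_surjective G)

noncomputable def gP (G : Good p₀ p₁ p₂) : ℝ → ℝ := (hIso G).symm

lemma gP_hP (G : Good p₀ p₁ p₂) (t : ℝ) : gP G (hP p₀ p₁ p₂ t) = t :=
  (hIso G).symm_apply_apply t

lemma hP_gP (G : Good p₀ p₁ p₂) (y : ℝ) : hP p₀ p₁ p₂ (gP G y) = y :=
  (hIso G).apply_symm_apply y

lemma gP_strictMono (G : Good p₀ p₁ p₂) : StrictMono (gP G) :=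
  (hIso G).symm.strictMono

lemma gP_zero (G : Good p₀ p₁ p₂) : gP G 0 = 0 := by
  have := gP_hP G 0; rwa [hP_zero] at this

lemma gP_odd (G : Good p₀ p₁ p₂) (y : ℝ) : gP G (-y) = - gP G y := by
  have : hP p₀ p₁ p₂ (-(gP G y)) = -y := by rw [hP_odd, hP_gP]
  calc gP G (-y) = gP G (hP p₀ p₁ p₂ (-(gP G y))) := by rw [this]
  _ = -(gP G y) := gP_hP G _

lemma gP_le_iff (G : Good p₀ p₁ p₂) {y t : ℝ} : gP G y ≤ t ↔ y ≤ hP p₀ p₁ p₂ t := by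
  constructor
  · intro h
    have := (hP_strictMono G).monotone h
    rwa [hP_gP] at this
  · intro h
    have := (gP_strictMono G).monotone h
    rwa [gP_hP] at this

lemma hP_analyticAt (x : ℝ) : AnalyticAt ℝ (hP p₀ p₁ p₂) x := by
  unfold hP
  exact ((analyticAt_const.mul analyticAt_id).add
    (analyticAt_const.mul (analyticAt_id.pow 3))).add
    (analyticAt_const.mul (analyticAt_id.pow 5))

lemma gP_continuous (G : Good p₀ p₁ p₂) : Continuous (gP G) := by
  have : Monotone (gP G) := (gP_strictMono G).monotone
  exact Monotone.continuous_of_surjective this (hIso G).symm.surjective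

lemma gP_hasDerivAt (G : Good p₀ p₁ p₂) (y : ℝ) :
    HasDerivAt (gP G) ((dP p₀ p₁ p₂ (gP G y))⁻¹) y := by
  apply HasDerivAt.of_local_left_inverse ((gP_continuous G).continuousAt)
    (hP_hasDerivAt (gP G y)) (dP_pos G _).ne'
  exact Filter.Eventually.of_forall (hP_gP G)

lemma gP_analyticAt (G : Good p₀ p₁ p₂) (y : ℝ) : AnalyticAt ℝ (gP G) y := by
  set e : Homeomorph ℝ ℝ :=
    { toEquiv := (hIso G).toEquiv
      continuous_toFun := hP_continuous
      continuous_invFun := gP_continuous G }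
  set f := e.toOpenPartialHomeomorph
  set x := gP G y with hxdef
  have : AnalyticAt ℝ f.symm y := by
    apply f.analyticAt_symm (by simp [f])
      (by exact hP_analyticAt x)
      (((hP_hasDerivAt x).hasFDerivAt_equiv (dP_pos G x).ne').fderiv)
  exact this.congr (Filter.Eventually.of_forall (fun z => rfl))

noncomputable def VP (G : Good p₀ p₁ p₂) : ℝ → ℝ := fun y => (gP G y) ^ 2

lemma VP_hP (G : Good p₀ p₁ p₂) (t : ℝ) : VP G (hP p₀ p₁ p₂ t) = t ^ 2 := by
  unfold VP; rw [gP_hP]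

lemma VP_even (G : Good p₀ p₁ p₂) (y : ℝ) : VP G (-y) = VP G y := by
  unfold VP; rw [gP_odd]; ring

lemma gP_pos (G : Good p₀ p₁ p₂) {y : ℝ} (hy : 0 < y) : 0 < gP G y := by
  have := gP_strictMono G hy
  rwa [gP_zero G] at this

lemma gP_nonneg (G : Good p₀ p₁ p₂) {y : ℝ} (hy : 0 ≤ y) : 0 ≤ gP G y := by
  have := (gP_strictMono G).monotone hy
  rwa [gP_zero G] at this

lemma VP_hasDerivAt (G : Good p₀ p₁ p₂) (y : ℝ) :
    HasDerivAt (VP G) (2 * gP G y * (dP p₀ p₁ p₂ (gP G y))⁻¹) y := by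
  have h := ((gP_hasDerivAt G y).pow 2)
  exact h.congr_deriv (by simp [mul_assoc])

lemma VP_isUM (G : Good p₀ p₁ p₂) : IsUM (VP G) := by
  constructor
  · exact fun x => (gP_analyticAt G x).pow 2
  · exact fun y => sq_nonneg _
  · unfold VP; rw [gP_zero G]; norm_num
  · intro y hy
    rw [(VP_hasDerivAt G y).deriv]
    rcases lt_or_gt_of_ne hy with h | h
    · have hg : gP G y < 0 := by
        have := gP_strictMono G h; rwa [gP_zero G] at this
      have : (0:ℝ) < (dP p₀ p₁ p₂ (gP G y))⁻¹ := inv_pos.mpr (dP_pos G _)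
      have h2 : 2 * gP G y * (dP p₀ p₁ p₂ (gP G y))⁻¹ < 0 := by nlinarith
      nlinarith
    · have hg : 0 < gP G y := gP_pos G h
      have : (0:ℝ) < (dP p₀ p₁ p₂ (gP G y))⁻¹ := inv_pos.mpr (dP_pos G _)
      have h2 : 0 < 2 * gP G y * (dP p₀ p₁ p₂ (gP G y))⁻¹ := by positivity
      nlinarith
  · have hg : Tendsto (gP G) atTop atTop := by
      apply tendsto_atTop_atTop.mpr
      intro b
      exact ⟨hP p₀ p₁ p₂ b, fun a ha => by
        have := (gP_strictMono G).monotone ha; rwa [gP_hP] at this⟩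
    exact (tendsto_pow_atTop (two_ne_zero)).comp hg
  · have : VP G = (VP G) ∘ (fun y => -y) := by
      funext y; simp [VP_even G y]
    rw [this]
    apply Tendsto.comp _ tendsto_neg_atBot_atTop
    have hg : Tendsto (gP G) atTop atTop := by
      apply tendsto_atTop_atTop.mpr
      intro b
      exact ⟨hP p₀ p₁ p₂ b, fun a ha => by
        have := (gP_strictMono G).monotone ha; rwa [gP_hP] at this⟩
    exact (tendsto_pow_atTop (two_ne_zero)).comp hg

lemma VP_deriv_eq (G : Good p₀ p₁ p₂) :
    deriv (VP G) = fun y => 2 * gP G y * (dP p₀ p₁ p₂ (gP G y))⁻¹ :=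
  funext fun y => (VP_hasDerivAt G y).deriv

lemma dP_hasDerivAt (t : ℝ) :
    HasDerivAt (dP p₀ p₁ p₂) (4 * p₁ * t + 8 * p₂ * t ^ 3) t := by
  have h : HasDerivAt (dP p₀ p₁ p₂)
      (0 + 2 * p₁ * (2 * t) + 2 * p₂ * (4 * t ^ 3)) t := by
    unfold dP
    exact ((hasDerivAt_const t _).add ((hasDerivAt_pow 2 t).const_mul _)).add
      ((hasDerivAt_pow 4 t).const_mul _) |>.congr_deriv (by ring_nf)
  convert h using 1; ring

lemma VP_iteratedDeriv_two (G : Good p₀ p₁ p₂) :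
    iteratedDeriv 2 (VP G) 0 = 1 / (2 * p₀ ^ 2) := by
  rw [iteratedDeriv_succ, iteratedDeriv_one]
  rw [VP_deriv_eq G]
  have h1 : HasDerivAt (fun y => 2 * gP G y) (2 * (dP p₀ p₁ p₂ (gP G 0))⁻¹) 0 :=
    (gP_hasDerivAt G 0).const_mul 2
  have h2 : HasDerivAt (fun y => (dP p₀ p₁ p₂ (gP G y))⁻¹)
      (-((4 * p₁ * gP G 0 + 8 * p₂ * (gP G 0) ^ 3) * (dP p₀ p₁ p₂ (gP G 0))⁻¹) /
        (dP p₀ p₁ p₂ (gP G 0)) ^ 2) 0 := by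
    exact (((dP_hasDerivAt (gP G 0)).comp 0 (gP_hasDerivAt G 0))).inv (dP_pos G _).ne'
  have := (h1.mul h2).deriv
  rw [show (fun y => 2 * gP G y * (dP p₀ p₁ p₂ (gP G y))⁻¹) = ((fun y => 2 * gP G y) * fun y => (dP p₀ p₁ p₂ (gP G y))⁻¹) from rfl, this]
  rw [gP_zero G]
  have hd0 : dP p₀ p₁ p₂ 0 = 2 * p₀ := by unfold dP; ring
  rw [hd0]
  have hp0 := G.h0
  field_simp
  ring

lemma VP_deriv_zero (G : Good p₀ p₁ p₂) : deriv (VP G) 0 = 0 := by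
  rw [VP_deriv_eq G]
  simp only []
  rw [gP_zero G]; ring

lemma VP_degAt0 (G : Good p₀ p₁ p₂) : degAt0 (VP G) = 2 := by
  unfold degAt0
  have h2 : 2 ∈ {m : ℕ | 1 ≤ m ∧ iteratedDeriv m (VP G) 0 ≠ 0} := by
    refine ⟨one_le_two, ?_⟩
    rw [VP_iteratedDeriv_two G]
    have := G.h0
    positivity
  apply le_antisymm (Nat.sInf_le h2)
  apply le_csInf ⟨2, h2⟩
  rintro m ⟨hm1, hm2⟩
  by_contra hlt
  push_neg at hlt
  interval_cases m
  · rw [iteratedDeriv_one, VP_deriv_zero G] at hm2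
    exact hm2 rfl

lemma VP_Vinv (G : Good p₀ p₁ p₂) {θ : ℝ} (hθ : 0 < θ) :
    Vinv (VP G) θ = hP p₀ p₁ p₂ (Real.sqrt θ) := by
  unfold Vinv
  have hset : {y : ℝ | 0 ≤ y ∧ VP G y ≤ θ} = Icc 0 (hP p₀ p₁ p₂ (Real.sqrt θ)) := by
    ext y
    simp only [mem_setOf_eq, mem_Icc]
    constructor
    · rintro ⟨hy0, hyθ⟩
      refine ⟨hy0, ?_⟩
      rw [← gP_le_iff G]
      have hg : 0 ≤ gP G y := gP_nonneg G hy0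
      exact (Real.le_sqrt hg hθ.le).mpr hyθ
    · rintro ⟨hy0, hy⟩
      refine ⟨hy0, ?_⟩
      have := (gP_le_iff G).mpr hy
      have hg : 0 ≤ gP G y := gP_nonneg G hy0
      calc VP G y = gP G y ^ 2 := rfl
      _ ≤ Real.sqrt θ ^ 2 := by
          apply pow_le_pow_left₀ hg this
      _ = θ := Real.sq_sqrt hθ.le
  rw [hset]
  exact csSup_Icc (by
    have : (0:ℝ) < Real.sqrt θ := Real.sqrt_pos.mpr hθ
    have := hP_strictMono G this
    rw [hP_zero] at this
    exact this.le)

lemma sin_sq_int : ∫ x in (0:ℝ)..(π/2), Real.sin x ^ 2 = π / 4 := by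
  rw [integral_sin_sq]
  simp [Real.sin_pi_div_two, Real.cos_pi_div_two]
  ring

lemma sin_pow4_int : ∫ x in (0:ℝ)..(π/2), Real.sin x ^ 4 = 3 * π / 16 := by
  have h := integral_sin_pow 2 (a := 0) (b := π/2)
  norm_num at h
  rw [h]
  ring

lemma aFun_eq (G : Good p₀ p₁ p₂) {θ : ℝ} (hθ : 0 < θ) :
    aFun (VP G) θ = π / Real.sqrt 2 * (p₀ + p₁ / 2 * θ + 3 * p₂ / 8 * θ ^ 2) := by
  set s := Real.sqrt θ with hsdef
  have hs : 0 < s := Real.sqrt_pos.mpr hθ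
  have hθs : s ^ 2 = θ := Real.sq_sqrt hθ.le
  have hξ : 0 < hP p₀ p₁ p₂ s := by
    have := hP_strictMono G hs; rwa [hP_zero] at this
  rw [aFun, VP_Vinv G hθ, intervalIntegral.integral_of_le hξ.le,
    MeasureTheory.integral_Ioc_eq_integral_Ioo]
  -- first change of variables y = hP t
  have himg : hP p₀ p₁ p₂ '' Ioo 0 s = Ioo 0 (hP p₀ p₁ p₂ s) := by
    have := OrderIso.image_Ioo (hIso G) 0 s
    rw [show (hIso G) 0 = 0 from hP_zero] at this
    exact this
  rw [← himg, integral_image_eq_integral_abs_deriv_smul measurableSet_Ioo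
    (fun x _ => (hP_hasDerivAt x).hasDerivWithinAt) ((hP_strictMono G).injective.injOn)]
  rw [MeasureTheory.setIntegral_congr_fun measurableSet_Ioo
    (g := fun t => dP p₀ p₁ p₂ t * (1 / (Real.sqrt 2 * Real.sqrt (θ - t ^ 2))))
    (by
      intro t ht
      simp only [smul_eq_mul]
      rw [VP_hP, abs_of_pos (dP_pos G t)])]
  -- second change of variables t = s * sin u
  have himg2 : (fun u => s * Real.sin u) '' Ioo 0 (π/2) = Ioo 0 s := by
    apply Subset.antisymm
    · rintro - ⟨u, hu, rfl⟩
      rcases hu with ⟨hu0, hu1⟩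
      have hsinpos : 0 < Real.sin u := Real.sin_pos_of_pos_of_lt_pi hu0
        (hu1.trans (by linarith [Real.pi_pos]))
      have hlt : Real.sin u < 1 := by
        have := Real.strictMonoOn_sin (a := u) (b := π/2)
          ⟨by linarith [Real.pi_pos], hu1.le⟩ ⟨by linarith [Real.pi_pos], le_refl _⟩ hu1
        rwa [Real.sin_pi_div_two] at this
      refine ⟨by positivity, ?_⟩
      show s * Real.sin u < s
      nlinarith
    · rintro t ⟨ht0, hts⟩
      refine ⟨Real.arcsin (t / s), ⟨?_, ?_⟩, ?_⟩
      · exact Real.arcsin_pos.mpr (by positivity)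
      · exact Real.arcsin_lt_pi_div_two.mpr ((div_lt_one hs).mpr hts)
      · show s * Real.sin (Real.arcsin (t / s)) = t
        rw [Real.sin_arcsin (neg_one_lt_zero.le.trans (by positivity))
          ((div_le_one hs).mpr hts.le)]
        field_simp
  have hinj2 : InjOn (fun u => s * Real.sin u) (Ioo 0 (π/2)) := by
    intro a ha b hb hab
    have := Real.injOn_sin ⟨by linarith [Real.pi_pos, ha.1], ha.2.le⟩
      ⟨by linarith [Real.pi_pos, hb.1], hb.2.le⟩ (mul_left_cancel₀ hs.ne' hab)
    exact this
  rw [← himg2, integral_image_eq_integral_abs_deriv_smul measurableSet_Ioo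
    (fun u _ => ((Real.hasDerivAt_sin u).const_mul s).hasDerivWithinAt) hinj2]
  rw [MeasureTheory.setIntegral_congr_fun measurableSet_Ioo
    (g := fun u => (Real.sqrt 2)⁻¹ * (2 * p₀) + (Real.sqrt 2)⁻¹ * (2 * p₁ * θ) * Real.sin u ^ 2
      + (Real.sqrt 2)⁻¹ * (2 * p₂ * θ ^ 2) * Real.sin u ^ 4)
    (by
      intro u hu
      rcases hu with ⟨hu0, hu1⟩
      have hcos : 0 < Real.cos u := Real.cos_pos_of_mem_Ioo
        ⟨by linarith [Real.pi_pos], hu1⟩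
      have hsin : 0 < Real.sin u := Real.sin_pos_of_pos_of_lt_pi hu0
        (hu1.trans (by linarith [Real.pi_pos]))
      have hkey : θ - (s * Real.sin u) ^ 2 = (s * Real.cos u) ^ 2 := by
        have := Real.sin_sq_add_cos_sq u
        nlinarith
      have hsqrt : Real.sqrt (θ - (s * Real.sin u) ^ 2) = s * Real.cos u := by
        rw [hkey, Real.sqrt_sq (by positivity)]
      simp only [smul_eq_mul]
      rw [hsqrt, abs_of_pos (by positivity : (0:ℝ) < s * Real.cos u)]
      have h2 : Real.sqrt 2 ≠ 0 := by positivity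
      have hsc : s * Real.cos u ≠ 0 := by positivity
      unfold dP
      have hss : (s * Real.sin u) ^ 2 = θ * Real.sin u ^ 2 := by
        rw [mul_pow, hθs]
      have hss4 : (s * Real.sin u) ^ 4 = θ ^ 2 * Real.sin u ^ 4 := by
        rw [mul_pow]
        congr 1
        linear_combination (s ^ 2 + θ) * hθs
      rw [hss, hss4]
      field_simp)]
  rw [← MeasureTheory.integral_Ioc_eq_integral_Ioo,
    ← intervalIntegral.integral_of_le (by positivity : (0:ℝ) ≤ π/2)]
  have c1 : Continuous fun u : ℝ => (Real.sqrt 2)⁻¹ * (2 * p₀) := continuous_const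
  have c2 : Continuous fun u : ℝ => (Real.sqrt 2)⁻¹ * (2 * p₁ * θ) * Real.sin u ^ 2 := by
    continuity
  have c3 : Continuous fun u : ℝ => (Real.sqrt 2)⁻¹ * (2 * p₂ * θ ^ 2) * Real.sin u ^ 4 := by
    continuity
  rw [intervalIntegral.integral_add (by exact (c1.add c2).intervalIntegrable _ _)
    (by exact c3.intervalIntegrable _ _),
    intervalIntegral.integral_add (by exact c1.intervalIntegrable _ _)
    (by exact c2.intervalIntegrable _ _)]
  rw [intervalIntegral.integral_const, intervalIntegral.integral_const_mul,
    intervalIntegral.integral_const_mul, sin_sq_int, sin_pow4_int]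
  simp only [smul_eq_mul]
  ring

lemma VP_not_quadratic (G : Good p₀ p₁ p₂) : ¬ ∃ α : ℝ, ∀ x : ℝ, VP G x = α * x ^ 2 := by
  rintro ⟨α, hα⟩
  have key : ∀ t : ℝ, α * hP p₀ p₁ p₂ t ^ 2 = t ^ 2 := by
    intro t
    have := hα (hP p₀ p₁ p₂ t)
    rw [VP_hP] at this
    linarith
  have hpos : ∀ t : ℝ, 0 < t → 0 < hP p₀ p₁ p₂ t := fun t ht => by
    have := hP_strictMono G ht; rwa [hP_zero] at this
  have h1 := hpos 1 one_pos
  have h2 := hpos 2 two_pos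
  have h3 := hpos 3 three_pos
  have k1 := key 1
  have k2 := key 2
  have k3 := key 3
  have hα0 : α ≠ 0 := by
    intro h; rw [h] at k1; norm_num at k1
  have e2 : hP p₀ p₁ p₂ 2 = 2 * hP p₀ p₁ p₂ 1 := by
    have hsq : hP p₀ p₁ p₂ 2 ^ 2 = (2 * hP p₀ p₁ p₂ 1) ^ 2 := by
      have : α * (hP p₀ p₁ p₂ 2 ^ 2 - 4 * hP p₀ p₁ p₂ 1 ^ 2) = 0 := by nlinarith
      have := (mul_eq_zero.mp this).resolve_left hα0
      nlinarith
    nlinarith [sq_nonneg (hP p₀ p₁ p₂ 2 - 2 * hP p₀ p₁ p₂ 1),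
      sq_nonneg (hP p₀ p₁ p₂ 2 + 2 * hP p₀ p₁ p₂ 1)]
  have e3 : hP p₀ p₁ p₂ 3 = 3 * hP p₀ p₁ p₂ 1 := by
    have hsq : hP p₀ p₁ p₂ 3 ^ 2 = (3 * hP p₀ p₁ p₂ 1) ^ 2 := by
      have : α * (hP p₀ p₁ p₂ 3 ^ 2 - 9 * hP p₀ p₁ p₂ 1 ^ 2) = 0 := by nlinarith
      have := (mul_eq_zero.mp this).resolve_left hα0
      nlinarith
    nlinarith [sq_nonneg (hP p₀ p₁ p₂ 3 - 3 * hP p₀ p₁ p₂ 1),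
      sq_nonneg (hP p₀ p₁ p₂ 3 + 3 * hP p₀ p₁ p₂ 1)]
  have hp2 := G.h2
  unfold hP at e2 e3
  norm_num at e2 e3
  -- e2 : 4p₁ + 12p₂ = 0 relation, e3 : 16p₁ + 96p₂ = 0 relation
  nlinarith [e2, e3]

end S19

open S19

/-- for every `E > 0` there exist even, non-quadratic UM-potentials
`V₁, V₂` of degree 2 with `a(θ) = b_E(θ)` on `(0,E)` and `√(V₂''(0)/V₁''(0))` irrational. -/
theorem stmt19 (E : ℝ) (hE : 0 < E) :
    ∃ V₁ V₂ : ℝ → ℝ, IsUM V₁ ∧ IsUM V₂ ∧ degAt0 V₁ = 2 ∧ degAt0 V₂ = 2 ∧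
      (∀ x : ℝ, V₁ (-x) = V₁ x) ∧ (∀ x : ℝ, V₂ (-x) = V₂ x) ∧
      (¬ ∃ α : ℝ, ∀ x : ℝ, V₁ x = α * x ^ 2) ∧
      (¬ ∃ α : ℝ, ∀ x : ℝ, V₂ x = α * x ^ 2) ∧
      (∀ θ ∈ Set.Ioo (0:ℝ) E, aFun V₁ θ = aFun V₂ (E - θ)) ∧
      Irrational (Real.sqrt (iteratedDeriv 2 V₂ 0 / iteratedDeriv 2 V₁ 0)) := by
  have hr2 : Real.sqrt 2 ^ 2 = 2 := Real.sq_sqrt (by norm_num)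
  have hrpos : 0 < Real.sqrt 2 := Real.sqrt_pos.mpr (by norm_num)
  have hrlt : Real.sqrt 2 < 4 := by nlinarith [sq_nonneg (Real.sqrt 2 - 4)]
  have hrgt : 1 < Real.sqrt 2 := by nlinarith [sq_nonneg (Real.sqrt 2 - 3/2)]
  set q := 2 * Real.sqrt 2 / (3 * E ^ 2) with hq
  have hqpos : 0 < q := by positivity
  have G₁ : Good (1 - Real.sqrt 2 / 4) 0 q :=
    ⟨by nlinarith, hqpos, by nlinarith⟩
  have G₂ : Good 1 (-(Real.sqrt 2 / E)) q := by
    refine ⟨one_pos, hqpos, ?_⟩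
    have h1 : (-(Real.sqrt 2 / E)) ^ 2 = 2 / E ^ 2 := by
      rw [neg_pow, div_pow, hr2]; ring
    rw [h1, hq, div_lt_iff₀ (by positivity)]
    have hE2 : (0:ℝ) < E ^ 2 := by positivity
    rw [show 4 * 1 * (2 * Real.sqrt 2 / (3 * E ^ 2)) * E ^ 2
        = 8 * Real.sqrt 2 / 3 * (E ^ 2 / E ^ 2) by ring, div_self hE2.ne']
    nlinarith
  refine ⟨VP G₁, VP G₂, VP_isUM G₁, VP_isUM G₂, VP_degAt0 G₁, VP_degAt0 G₂,
    VP_even G₁, VP_even G₂, VP_not_quadratic G₁, VP_not_quadratic G₂, ?_, ?_⟩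
  · intro θ hθ
    rw [aFun_eq G₁ hθ.1, aFun_eq G₂ (by linarith [hθ.2] : (0:ℝ) < E - θ), hq]
    have hE' : E ≠ 0 := hE.ne'
    field_simp
    ring
  · rw [VP_iteratedDeriv_two G₂, VP_iteratedDeriv_two G₁]
    have hne : (1 - Real.sqrt 2 / 4) ≠ 0 := by nlinarith
    have heq : 1 / (2 * 1 ^ 2) / (1 / (2 * (1 - Real.sqrt 2 / 4) ^ 2))
        = (1 - Real.sqrt 2 / 4) ^ 2 := by field_simp
    rw [heq, Real.sqrt_sq (by nlinarith)]
    have h4 : Irrational (Real.sqrt 2 / (4:ℤ)) :=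
      irrational_sqrt_two.div_intCast (by norm_num)
    have h5 := h4.ratCast_sub (q := 1)
    convert h5 using 2 <;> norm_num
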